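/- Every calibration map in the linear Dirichlet parametrisation μ_{DirLin}(q; W, b) = σ(W ln q + b) can be represented in the canonical parametrisation: there exist a matrix A ∈ [0,∞)^{k×k} whose every column contains at least one zero entry, and a vector c in the probability simplex, such that σ(W ln q + b) = σ(A ln(q/(1/k)) + ln c) for all q in the interior of the probability simplex. Specifically one may take a_{ij} = w_{ij} − min_{i'} w_{i'j} and c = σ(W ln u + b) where u = (1/k,…,1/k). -/

import Mathlib

noncomputable def softmax {k : ℕ} (z : Fin k → ℝ) : Fin k → ℝ :=
  fun i => Real.exp (z i) / ∑ j, Real.exp (z j)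

lemma softmax_shift {k : ℕ} (z : Fin k → ℝ) (t : ℝ) :
    softmax (fun i => z i + t) = softmax z := by
  funext i
  simp only [softmax, Real.exp_add, ← Finset.sum_mul]
  rw [mul_div_mul_right _ _ (Real.exp_ne_zero t)]

/-- Every linear-parametrisation Dirichlet calibration map can be written in the
canonical parametrisation: `A` is non-negative with a zero in every column and
`c` is a strictly positive vector in the probability simplex. -/
theorem dirLin_to_canonical {k : ℕ} (hk : 0 < k)
    (W : Matrix (Fin k) (Fin k) ℝ) (b : Fin k → ℝ) :
    ∃ (A : Matrix (Fin k) (Fin k) ℝ) (c : Fin k → ℝ),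
      (∀ i j, 0 ≤ A i j) ∧
      (∀ j, ∃ i, A i j = 0) ∧
      (∀ i, 0 < c i) ∧ (∑ i, c i = 1) ∧
      (∀ q : Fin k → ℝ, (∀ i, 0 < q i) → (∑ i, q i = 1) →
        softmax (W.mulVec (fun i => Real.log (q i)) + b) =
        softmax (A.mulVec (fun i => Real.log (q i / (1 / (k : ℝ)))) + fun i => Real.log (c i))) := by
  haveI : NeZero k := ⟨hk.ne'⟩
  have hne : (Finset.univ : Finset (Fin k)).Nonempty := Finset.univ_nonempty
  have hk' : (0:ℝ) < k := by exact_mod_cast hk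
  set m : Fin k → ℝ := fun j => Finset.univ.inf' hne (fun i => W i j) with hm
  set u : Fin k → ℝ := fun _ => Real.log (1 / (k:ℝ)) with hu
  set S : ℝ := ∑ j, Real.exp ((W.mulVec u + b) j) with hS
  have hSpos : 0 < S := Finset.sum_pos (fun j _ => Real.exp_pos _) hne
  refine ⟨fun i j => W i j - m j, softmax (W.mulVec u + b), ?_, ?_, ?_, ?_, ?_⟩
  · intro i j
    have : m j ≤ W i j := Finset.inf'_le _ (Finset.mem_univ i)
    show (0:ℝ) ≤ W i j - m j
    linarith
  · intro j
    obtain ⟨i, _, hi⟩ := Finset.exists_mem_eq_inf' hne (fun i => W i j)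
    exact ⟨i, by simp [hm, ← hi]⟩
  · intro i
    exact div_pos (Real.exp_pos _) hSpos
  · rw [show (∑ i, softmax (W.mulVec u + b) i) = (∑ i, Real.exp ((W.mulVec u + b) i)) / S by
      simp [softmax, Finset.sum_div, hS]]
    exact div_self hSpos.ne'
  · intro q hq hsum
    have hlogc : ∀ i, Real.log (softmax (W.mulVec u + b) i)
        = (W.mulVec u + b) i - Real.log S := by
      intro i
      rw [softmax, ← hS, Real.log_div (Real.exp_ne_zero _) hSpos.ne', Real.log_exp]
    set c0 : ℝ := Real.log (1 / (k:ℝ)) with hc0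
    have hlogq : ∀ j, Real.log (q j / (1 / (k:ℝ))) = Real.log (q j) - c0 := by
      intro j
      rw [Real.log_div (hq j).ne' (by positivity)]
    set t : ℝ := - Real.log S - ∑ j, m j * (Real.log (q j) - c0) with ht
    have key : (Matrix.mulVec (fun i j => W i j - m j)
          (fun i => Real.log (q i / (1 / (k : ℝ))))
          + fun i => Real.log (softmax (W.mulVec u + b) i))
        = fun i => (W.mulVec (fun i => Real.log (q i)) + b) i + t := by
      funext i
      simp only [Pi.add_apply, hlogc]
      simp only [Pi.add_apply, hlogc, Matrix.mulVec, dotProduct, hu, Pi.add_apply]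
      have h1 : ∀ j, Real.log (q j / (1 / (k:ℝ))) = Real.log (q j) - c0 := hlogq
      rw [Finset.sum_congr rfl (fun j _ => by rw [h1 j])]
      have expand : ∀ j ∈ Finset.univ, (W i j - m j) * (Real.log (q j) - c0)
          = (W i j * Real.log (q j) - W i j * c0) - m j * (Real.log (q j) - c0) := by
        intro j _; ring
      rw [Finset.sum_congr rfl expand, Finset.sum_sub_distrib, Finset.sum_sub_distrib]
      simp only [ht, hc0]
      ring
    rw [key, softmax_shift]
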